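/- Let B = C_0 → C_1 → ⋯ → C_s = C be a sequence of surjective Λ-module homomorphisms f_1, …, f_s between finite length Λ-modules such that each kernel ker f_ℓ is semisimple and soc(ker(f_{ℓ+1} ∘ f_ℓ)) = ker f_ℓ for ℓ = 1, …, s−1. Then for all 1 ≤ ℓ ≤ s−1 and all j ≥ 0 with ℓ + j ≤ s, one has soc(ker(f_{ℓ+j} ∘ ⋯ ∘ f_ℓ)) = ker f_ℓ. -/

import Mathlib

variable {Λ : Type} [CommRing Λ] {C : ℕ → Type}
  [∀ i, AddCommGroup (C i)] [∀ i, Module Λ (C i)]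

/-- The composite `C i → C (i + j)` of `j` consecutive maps of the chain `f`. -/
def chainComp (f : ∀ i, C i →ₗ[Λ] C (i + 1)) (i : ℕ) : (j : ℕ) → (C i →ₗ[Λ] C (i + j))
  | 0 => LinearMap.id
  | j + 1 => (f (i + j)).comp (chainComp f i j)

lemma ker_le_ker_chainComp (f : ∀ i, C i →ₗ[Λ] C (i + 1)) (i : ℕ) :
    ∀ k, LinearMap.ker (f i) ≤ LinearMap.ker (chainComp f i (k + 1)) := by
  intro k
  induction k with
  | zero => intro x hx; simpa [chainComp] using hx
  | succ k ih =>
    intro x hx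
    have h1 : chainComp f i (k + 1) x = 0 := ih hx
    show f (i + (k + 1)) (chainComp f i (k + 1) x) = 0
    rw [h1, map_zero]

/-- Let `B = C 0 → C 1 → ⋯ → C s = C` be a sequence of surjective `Λ`-homomorphisms
between finite length modules such that each kernel is semisimple (killed by `p`) and
`soc (ker (f_{ℓ+1} ∘ f_ℓ)) = ker f_ℓ`.  Then the socle of the kernel of any composite
`C_{ℓ-1} → C_{ℓ+j}` equals `ker f_ℓ`.  (Here the map `f_ℓ : C_{ℓ-1} → C_ℓ` of the paper
is `f (ℓ-1)`, and `soc K = K ⊓ {x | p • x = 0}`.) -/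
theorem socle_ker_chainComp
    [IsDomain Λ] [IsDiscreteValuationRing Λ] (p : Λ) (hp : Irreducible p)
    (s : ℕ) (f : ∀ i, C i →ₗ[Λ] C (i + 1))
    (hfin : ∀ i, i ≤ s → IsFiniteLength Λ (C i))
    (hsurj : ∀ i, i < s → Function.Surjective (f i))
    (hss : ∀ i, i < s → ∀ x ∈ LinearMap.ker (f i), p • x = 0)
    (hsoc : ∀ i, i + 2 ≤ s →
      LinearMap.ker (chainComp f i 2) ⊓ Submodule.torsionBy Λ (C i) p =
        LinearMap.ker (f i)) :
    ∀ i j, i + j + 1 ≤ s →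
      LinearMap.ker (chainComp f i (j + 1)) ⊓ Submodule.torsionBy Λ (C i) p =
        LinearMap.ker (f i) := by
  intro i j
  induction j generalizing i with
  | zero =>
    intro h
    apply le_antisymm
    · intro x hx
      simpa [chainComp] using hx.1
    · intro x hx
      refine ⟨?_, hss i (by omega) x hx⟩
      simpa [chainComp] using hx
  | succ j ih =>
    intro h
    apply le_antisymm
    · intro x hx
      obtain ⟨hk, ht⟩ := hx
      have hpx : p • x = 0 := ht
      -- z = chainComp f i j x lies in soc (ker (chainComp f (i+j) 2))
      have hz : chainComp f i j x ∈
          LinearMap.ker (chainComp f (i + j) 2) ⊓ Submodule.torsionBy Λ (C (i + j)) p := by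
        constructor
        · show f (i + j + 1) (f (i + j) (chainComp f i j x)) = 0
          exact hk
        · show p • chainComp f i j x = 0
          rw [← map_smul, hpx, map_zero]
      rw [hsoc (i + j) (by omega)] at hz
      have hx' : x ∈ LinearMap.ker (chainComp f i (j + 1)) := by
        show f (i + j) (chainComp f i j x) = 0
        exact hz
      have := ih i (by omega)
      rw [← this]
      exact ⟨hx', ht⟩
    · intro x hx
      exact ⟨ker_le_ker_chainComp f i (j + 1) hx, hss i (by omega) x hx⟩
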